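/- (Pathwise identity for the ε-mollified return, used in the proof of Theorem 1.) With the ε-mollified reward r_ε(h, y) := 𝟙[0 ≤ h < Δt] · 𝟙[(h,y) not absorbing] · l_ε(y), the total mollified return of the augmented trajectory equals the product of safety indicators times the mollified terminal payoff: Σ_{k=0}^∞ r_ε(S_k) = ( ∏_{j=0}^{N} 𝟙[x_j ∈ C] ) · l_ε(x_N). -/
import Mathlib


open scoped Classical

/-- A pair `(h, y)` is absorbing iff `h < 0` or `y ∉ C`. -/
def IsAbsorbing {𝒳 : Type*} (C : Set 𝒳) (s : ℝ × 𝒳) : Prop :=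
  s.1 < 0 ∨ s.2 ∉ C

/-- Reward: `1` if `0 ≤ h < Δt` and `(h, y)` is not absorbing, else `0`. -/
noncomputable def reward {𝒳 : Type*} (C : Set 𝒳) (Δt : ℝ) (s : ℝ × 𝒳) : ℝ :=
  if 0 ≤ s.1 ∧ s.1 < Δt ∧ ¬ IsAbsorbing C s then 1 else 0

/-- The augmented trajectory built from a realized trajectory `x`. -/
noncomputable def augTraj {𝒳 : Type*} (C : Set 𝒳) (Δt τ : ℝ) (x : ℕ → 𝒳) : ℕ → ℝ × 𝒳
  | 0 => (τ, x 0)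
  | k + 1 =>
      if IsAbsorbing C (augTraj C Δt τ x k) then augTraj C Δt τ x k
      else ((augTraj C Δt τ x k).1 - Δt, x (k + 1))

open Metric

/-- The shrunk safe set `C_ε = {x ∈ C : dist(x, Cᶜ) ≥ ε}`. -/
def shrunkSet {𝒳 : Type*} [MetricSpace 𝒳] (C : Set 𝒳) (ε : ℝ) : Set 𝒳 :=
  {x ∈ C | ε ≤ infDist x Cᶜ}

/-- The mollified payoff `l_ε(x) = max{1 - dist(x, C_ε)/ε, 0}`. -/
noncomputable def molPayoff {𝒳 : Type*} [MetricSpace 𝒳] (C : Set 𝒳) (ε : ℝ) (x : 𝒳) : ℝ :=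
  max (1 - infDist x (shrunkSet C ε) / ε) 0

/-- The ε-mollified reward `r_ε(h,y) = 𝟙[0 ≤ h < Δt]·𝟙[(h,y) not absorbing]·l_ε(y)`. -/
noncomputable def rewardEps {𝒳 : Type*} [MetricSpace 𝒳] (C : Set 𝒳) (Δt ε : ℝ)
    (s : ℝ × 𝒳) : ℝ :=
  (if 0 ≤ s.1 ∧ s.1 < Δt then (1 : ℝ) else 0) *
    (if ¬ IsAbsorbing C s then (1 : ℝ) else 0) * molPayoff C ε s.2

lemma augTraj_frozen {𝒳 : Type*} (C : Set 𝒳) (Δt τ : ℝ) (x : ℕ → 𝒳) (k : ℕ)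
    (h : IsAbsorbing C (augTraj C Δt τ x k)) :
    ∀ m, k ≤ m → augTraj C Δt τ x m = augTraj C Δt τ x k := by
  intro m hm
  induction m, hm using Nat.le_induction with
  | base => rfl
  | succ n hn ih =>
      rw [augTraj, ih, if_pos h]

lemma traj_val {𝒳 : Type*} (C : Set 𝒳) (Δt τ : ℝ) (x : ℕ → 𝒳)
    (hΔt : 0 < Δt) (hτ : 0 ≤ τ) (k : ℕ) (h1 : ∀ j < k, x j ∈ C)
    (h2 : (k : ℝ) * Δt ≤ τ) :
    augTraj C Δt τ x k = (τ - k * Δt, x k) := by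
  induction k with
  | zero => simp [augTraj]
  | succ n ih =>
      have h2' : ((n : ℝ) + 1) * Δt ≤ τ := by push_cast at h2; linarith
      have hn : (n : ℝ) * Δt ≤ τ := by nlinarith
      have hv := ih (fun j hj => h1 j (hj.trans (Nat.lt_succ_self n))) hn
      have hna : ¬ IsAbsorbing C (augTraj C Δt τ x n) := by
        rw [hv]; rintro (h | h)
        · simp only at h; linarith
        · exact h (h1 n (Nat.lt_succ_self n))
      rw [augTraj, if_neg hna, hv]
      refine Prod.ext ?_ rfl
      push_cast; ring

lemma rewardEps_of_abs {𝒳 : Type*} [MetricSpace 𝒳] (C : Set 𝒳) (Δt ε : ℝ)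
    (s : ℝ × 𝒳) (h : IsAbsorbing C s) : rewardEps C Δt ε s = 0 := by
  simp [rewardEps, h]

lemma rewardEps_of_not {𝒳 : Type*} [MetricSpace 𝒳] (C : Set 𝒳) (Δt ε : ℝ)
    (s : ℝ × 𝒳) (h : ¬ (0 ≤ s.1 ∧ s.1 < Δt)) : rewardEps C Δt ε s = 0 := by
  simp [rewardEps, h]

/-- pathwise identity for the ε-mollified return: the total
mollified return equals the product of safety indicators times the mollified
terminal payoff `l_ε(x_N)`, where `N = ⌊τ/Δt⌋`. -/
theorem stmt_12 {𝒳 : Type*} [MetricSpace 𝒳] (C : Set 𝒳) (Δt τ ε : ℝ)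
    (hΔt : 0 < Δt) (hτ : 0 ≤ τ) (hε : 0 < ε) (x : ℕ → 𝒳) :
    ∑' k : ℕ, rewardEps C Δt ε (augTraj C Δt τ x k) =
      (∏ j ∈ Finset.range (⌊τ / Δt⌋₊ + 1), (if x j ∈ C then (1 : ℝ) else 0)) *
        molPayoff C ε (x ⌊τ / Δt⌋₊) := by
  set N := ⌊τ / Δt⌋₊ with hN
  have hN1 : (N : ℝ) * Δt ≤ τ := by
    have := Nat.floor_le (div_nonneg hτ hΔt.le)
    calc (N : ℝ) * Δt ≤ (τ / Δt) * Δt := by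
          exact mul_le_mul_of_nonneg_right this hΔt.le
      _ = τ := by field_simp
  have hN2 : τ < ((N : ℝ) + 1) * Δt := by
    have := Nat.lt_floor_add_one (τ / Δt)
    calc τ = (τ / Δt) * Δt := by field_simp
      _ < ((N : ℝ) + 1) * Δt := by
          exact mul_lt_mul_of_pos_right this hΔt
  by_cases hsafe : ∀ j ≤ N, x j ∈ C
  · -- all safe up to N
    have hvalN : augTraj C Δt τ x N = (τ - N * Δt, x N) :=
      traj_val C Δt τ x hΔt hτ N (fun j hj => hsafe j hj.le) hN1
    have hnaN : ¬ IsAbsorbing C (augTraj C Δt τ x N) := by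
      rw [hvalN]; rintro (h | h)
      · simp only at h; linarith
      · exact h (hsafe N le_rfl)
    have habs : IsAbsorbing C (augTraj C Δt τ x (N + 1)) := by
      rw [augTraj, if_neg hnaN, hvalN]
      left; simp only; linarith
    have hmain : rewardEps C Δt ε (augTraj C Δt τ x N) = molPayoff C ε (x N) := by
      rw [hvalN, rewardEps, if_pos, if_pos, one_mul, one_mul]
      · rw [hvalN] at hnaN; exact hnaN
      · constructor <;> simp only <;> linarith
    rw [tsum_eq_single N]
    · rw [hmain, Finset.prod_eq_one, one_mul]
      intro j hj
      exact if_pos (hsafe j (Nat.lt_succ_iff.mp (Finset.mem_range.mp hj)))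
    · intro k hk
      rcases lt_or_gt_of_ne hk with hlt | hgt
      · -- k < N : h ≥ Δt
        have hk' : (k : ℝ) * Δt ≤ τ := by
          have : (k : ℝ) ≤ N := by exact_mod_cast hlt.le
          nlinarith
        have hv := traj_val C Δt τ x hΔt hτ k
          (fun j hj => hsafe j (hj.le.trans hlt.le)) hk'
        apply rewardEps_of_not
        rw [hv]
        rintro ⟨-, h2⟩
        simp only at h2
        have : (k : ℝ) + 1 ≤ N := by exact_mod_cast hlt
        nlinarith
      · -- k > N : frozen at absorbing state
        have := augTraj_frozen C Δt τ x (N + 1) habs k hgt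
        rw [this]
        exact rewardEps_of_abs C Δt ε _ habs
  · -- some unsafe index j₀ ≤ N
    push_neg at hsafe
    have hex : ∃ j, j ≤ N ∧ x j ∉ C := hsafe
    classical
    set j₀ := Nat.find hex with hj₀
    obtain ⟨hj₀N, hj₀C⟩ := Nat.find_spec hex
    have hmin : ∀ j < j₀, x j ∈ C := by
      intro j hj
      have := Nat.find_min hex hj
      push_neg at this
      exact this (hj.le.trans hj₀N)
    have hval : augTraj C Δt τ x j₀ = (τ - j₀ * Δt, x j₀) := by
      refine traj_val C Δt τ x hΔt hτ j₀ hmin ?_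
      have : (j₀ : ℝ) ≤ N := by exact_mod_cast hj₀N
      nlinarith
    have habs : IsAbsorbing C (augTraj C Δt τ x j₀) := by
      rw [hval]; right; exact hj₀C
    have hall : ∀ k, rewardEps C Δt ε (augTraj C Δt τ x k) = 0 := by
      intro k
      rcases le_or_gt j₀ k with hk | hk
      · rw [augTraj_frozen C Δt τ x j₀ habs k hk]
        exact rewardEps_of_abs C Δt ε _ habs
      · -- k < j₀ ≤ N, so k < N and h ≥ Δt
        have hkN : k < N := lt_of_lt_of_le hk hj₀N
        have hk' : (k : ℝ) * Δt ≤ τ := by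
          have : (k : ℝ) ≤ N := by exact_mod_cast hkN.le
          nlinarith
        have hv := traj_val C Δt τ x hΔt hτ k
          (fun j hj => hmin j (hj.trans hk)) hk'
        apply rewardEps_of_not
        rw [hv]
        rintro ⟨-, h2⟩
        simp only at h2
        have : (k : ℝ) + 1 ≤ N := by exact_mod_cast hkN
        nlinarith
    simp only [hall, tsum_zero]
    have hz : (∏ j ∈ Finset.range (N + 1), (if x j ∈ C then (1 : ℝ) else 0)) = 0 :=
      Finset.prod_eq_zero (Finset.mem_range.mpr (Nat.lt_succ_of_le hj₀N)) (if_neg hj₀C)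
    rw [hz, zero_mul]
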